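/- For every μ ∈ [0,1]^n, μ lies in the cubical set C_φ (the union of the prime implicant cubes of φ) if and only if the independent distribution p_μ is possible for φ. -/

import Mathlib

/-- A world is an assignment of Boolean values to `n` variables. -/
abbrev World (n : ℕ) := Fin n → Bool

/-- The independent distribution with parameters `μ`:
`p_μ(w) = ∏ i, μ i ^ (w i) * (1 - μ i) ^ (1 - w i)`. -/
def pInd {n : ℕ} (μ : Fin n → ℝ) (w : World n) : ℝ :=
  ∏ i, if w i then μ i else 1 - μ i

/-- A partial assignment with domain `D` and values `a` covers the world `w`. -/
def covers {n : ℕ} (D : Set (Fin n)) (a : Fin n → Bool) (w : World n) : Prop :=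
  ∀ i ∈ D, w i = a i

/-- The cover of a partial assignment: all worlds agreeing with it on its domain. -/
def coverSet {n : ℕ} (D : Set (Fin n)) (a : Fin n → Bool) : Set (World n) :=
  {w | covers D a w}

/-- A partial assignment is an implicant of `φ` if every world in its cover is possible. -/
def Implicant {n : ℕ} (φ : World n → Bool) (D : Set (Fin n)) (a : Fin n → Bool) : Prop :=
  ∀ w : World n, covers D a w → φ w = true

/-- A prime implicant: an implicant whose cover is not strictly contained in the cover
of another implicant. -/
def PrimeImplicant {n : ℕ} (φ : World n → Bool) (D : Set (Fin n)) (a : Fin n → Bool) : Prop :=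
  Implicant φ D a ∧ ∀ (E : Set (Fin n)) (b : Fin n → Bool),
    Implicant φ E b → ¬ (coverSet D a ⊂ coverSet E b)

/-- The deterministic coordinates of the parameter vector `μ`. -/
def detDom {n : ℕ} (μ : Fin n → ℝ) : Set (Fin n) := {i | μ i = 0 ∨ μ i = 1}

/-- The value assigned by `μ` at a deterministic coordinate. -/
noncomputable def detVal {n : ℕ} (μ : Fin n → ℝ) (i : Fin n) : Bool :=
  if μ i = 1 then true else false

/-- A distribution over worlds: nonnegative, summing to one. -/
def IsDistribution {n : ℕ} (p : World n → ℝ) : Prop :=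
  (∀ w, 0 ≤ p w) ∧ ∑ w, p w = 1

/-- A distribution is possible for `φ` if it vanishes on all impossible worlds. -/
def PossibleDist {n : ℕ} (φ : World n → Bool) (p : World n → ℝ) : Prop :=
  ∀ w, φ w = false → p w = 0

/-- The unit hypercube of parameters. -/
def unitCube (n : ℕ) : Set (Fin n → ℝ) := {μ | ∀ i, μ i ∈ Set.Icc (0:ℝ) 1}

/-- The implicant cube of a partial assignment: coordinates in `D` are fixed,
the others range over `[0,1]`. -/
def implicantCube {n : ℕ} (D : Set (Fin n)) (a : Fin n → Bool) : Set (Fin n → ℝ) :=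
  {μ | (∀ i, μ i ∈ Set.Icc (0:ℝ) 1) ∧ ∀ i ∈ D, μ i = if a i then 1 else 0}

/-- The cubical set of `φ`: the union of the prime implicant cubes. -/
def cubicalSet {n : ℕ} (φ : World n → Bool) : Set (Fin n → ℝ) :=
  ⋃ (D : Set (Fin n)) (a : Fin n → Bool) (_ : PrimeImplicant φ D a), implicantCube D a

/-- The weighted model count `Σ_{w : φ(w)=1} p_μ(w)`. -/
noncomputable def WMC {n : ℕ} (φ : World n → Bool) (μ : Fin n → ℝ) : ℝ :=
  ∑ w : World n, if φ w then pInd μ w else 0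

/-- A world regarded as a point of `[0,1]^n ⊆ ℝ^n`. -/
def worldPoint {n : ℕ} (w : World n) : Fin n → ℝ := fun i => if w i then 1 else 0

/-- An elementary interval is `{0}`, `{1}` or `[0,1]`. -/
def ElemInterval (I : Set ℝ) : Prop := I = {0} ∨ I = {1} ∨ I = Set.Icc 0 1

/-- An elementary cube is a product of elementary intervals. -/
def IsElemCube {n : ℕ} (C : Set (Fin n → ℝ)) : Prop :=
  ∃ I : Fin n → Set ℝ, (∀ i, ElemInterval (I i)) ∧ C = {x | ∀ i, x i ∈ I i}

lemma detVal_consistent {n : ℕ} (μ : Fin n → ℝ) {i : Fin n} (hi : i ∈ detDom μ) :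
    μ i = if detVal μ i then 1 else 0 := by
  rcases hi with h0 | h1
  · have : ¬ (μ i = 1) := by rw [h0]; norm_num
    simp [detVal, this, h0]
  · simp [detVal, h1]

lemma pInd_ne_zero_covers {n : ℕ} (μ : Fin n → ℝ) (w : World n)
    (h : pInd μ w ≠ 0) : covers (detDom μ) (detVal μ) w := by
  intro i hi
  have hfac : (if w i then μ i else 1 - μ i) ≠ 0 := by
    intro h0
    exact h (Finset.prod_eq_zero (Finset.mem_univ i) h0)
  rcases hi with h0 | h1
  · have hd : detVal μ i = false := by
      have : ¬ (μ i = 1) := by rw [h0]; norm_num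
      simp [detVal, this]
    rw [hd]
    by_contra hw
    simp only [Bool.not_eq_false] at hw
    rw [hw, if_pos rfl] at hfac
    exact hfac h0
  · have hd : detVal μ i = true := by simp [detVal, h1]
    rw [hd]
    by_contra hw
    simp only [Bool.not_eq_true] at hw
    rw [hw] at hfac
    simp [h1] at hfac

lemma coverSubset {n : ℕ} {D E : Set (Fin n)} {a b : Fin n → Bool}
    (h : coverSet D a ⊆ coverSet E b) : ∀ i ∈ E, i ∈ D ∧ b i = a i := by
  classical
  intro i hi
  set w : World n := fun j => if j ∈ D then a j else !(b j) with hw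
  have hwD : w ∈ coverSet D a := by
    intro j hj; simp [hw, hj]
  have hwE : w i = b i := h hwD i hi
  by_cases hiD : i ∈ D
  · refine ⟨hiD, ?_⟩
    rw [← hwE]; simp [hw, hiD]
  · exfalso
    simp [hw, hiD] at hwE

lemma exists_prime {n : ℕ} (φ : World n → Bool) (D : Set (Fin n)) (a : Fin n → Bool)
    (h : Implicant φ D a) :
    ∃ E b, PrimeImplicant φ E b ∧ coverSet D a ⊆ coverSet E b := by
  classical
  set S : Set (Set (World n)) :=
    {C | ∃ E b, Implicant φ E b ∧ coverSet D a ⊆ coverSet E b ∧ C = coverSet E b} with hS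
  have hfin : S.Finite := Set.toFinite S
  have hne : S.Nonempty := ⟨coverSet D a, D, a, h, subset_rfl, rfl⟩
  obtain ⟨C, hC, hmax⟩ : ∃ C ∈ S, ∀ C' ∈ S, id C ≤ id C' → id C = id C' := by
    obtain ⟨C, hC, hmax⟩ := hfin.exists_maximalFor id S hne
    exact ⟨C, hC, fun C' hC' hle => le_antisymm hle (hmax hC' hle)⟩
  obtain ⟨E, b, himp, hsub, hCeq⟩ := hC
  refine ⟨E, b, ⟨himp, ?_⟩, hsub⟩
  intro E' b' himp' hss
  have hmem : coverSet E' b' ∈ S := ⟨E', b', himp', hsub.trans hss.subset, rfl⟩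
  have := hmax _ hmem (by rw [hCeq]; exact hss.subset)
  rw [hCeq] at this
  exact hss.ne this

/-- The cubical set represents the possible independent distributions. -/
theorem stmt2 (n : ℕ) (hn : 1 ≤ n) (φ : World n → Bool) (hφ : ∃ w, φ w = true)
    (μ : Fin n → ℝ) (hμ : μ ∈ unitCube n) :
    μ ∈ cubicalSet φ ↔ PossibleDist φ (pInd μ) := by
  constructor
  · intro hmem
    simp only [cubicalSet, Set.mem_iUnion] at hmem
    obtain ⟨D, a, hprime, hcube⟩ := hmem
    intro w hw
    by_contra hp
    have hcov := pInd_ne_zero_covers μ w hp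
    have hcovDa : covers D a w := by
      intro i hi
      have hval : μ i = if a i then 1 else 0 := hcube.2 i hi
      have hiDet : i ∈ detDom μ := by
        cases ha : a i
        · left; rw [hval, ha]; simp
        · right; rw [hval, ha]; simp
      have hdv : detVal μ i = a i := by
        cases ha : a i
        · have : μ i = 0 := by rw [hval, ha]; simp
          have h1 : ¬ (μ i = 1) := by rw [this]; norm_num
          simp [detVal, h1]
        · have : μ i = 1 := by rw [hval, ha]; simp
          simp [detVal, this]
      rw [← hdv]
      exact hcov i hiDet
    have := hprime.1 w hcovDa
    rw [this] at hw
    simp at hw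
  · intro hposs
    have himp : Implicant φ (detDom μ) (detVal μ) := by
      intro w hcov
      by_contra hfw
      simp only [Bool.not_eq_true] at hfw
      have hz : pInd μ w = 0 := hposs w hfw
      obtain ⟨i, _, hfac⟩ := Finset.prod_eq_zero_iff.mp hz
      by_cases hwi : w i
      · rw [if_pos hwi] at hfac
        have hiDet : i ∈ detDom μ := Or.inl hfac
        have := hcov i hiDet
        have hdv : detVal μ i = false := by
          have h1 : ¬ (μ i = 1) := by rw [hfac]; norm_num
          simp [detVal, h1]
        rw [hdv] at this
        rw [this] at hwi
        simp at hwi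
      · rw [if_neg hwi] at hfac
        have h1 : μ i = 1 := by linarith
        have hiDet : i ∈ detDom μ := Or.inr h1
        have := hcov i hiDet
        have hdv : detVal μ i = true := by simp [detVal, h1]
        rw [hdv] at this
        exact hwi this
    obtain ⟨E, b, hprime, hsub⟩ := exists_prime φ (detDom μ) (detVal μ) himp
    simp only [cubicalSet, Set.mem_iUnion]
    refine ⟨E, b, hprime, hμ, ?_⟩
    intro i hi
    obtain ⟨hiD, hba⟩ := coverSubset hsub i hi
    rw [hba, ← detVal_consistent μ hiD]
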